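/- For k ∈ (0,1), α ≠ 0, and æ > 0 with 16æ⁴k²(1-k²) = α² (equivalently æ = (√(E²+α²)/2)^{1/2} with k² = 1/2 + E/(4æ²)), the function f_y(p) = -16æ⁴k⁴ cn³p dn p sn p + (16æ⁴k² E(p) - α²p)(dn²p - k² cn²p sn²p) is strictly positive for all p ∈ (0, K(k)), where sn, cn, dn are Jacobi elliptic functions with modulus k, E(p) = ∫₀ᵖ dn²t dt, and K(k) is the complete elliptic integral of the first kind. -/

import Mathlib

/-- Positivity of `f_y` on `(0, K(k))` (timelike Maxwell-set analysis).
The Jacobi elliptic functions are characterized by their defining ODE system. -/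
theorem fy_pos
    (k : ℝ) (hk : k ∈ Set.Ioo (0:ℝ) 1)
    (sn cn dn : ℝ → ℝ)
    (hsn0 : sn 0 = 0) (hcn0 : cn 0 = 1) (hdn0 : dn 0 = 1)
    (hsn : ∀ t, HasDerivAt sn (cn t * dn t) t)
    (hcn : ∀ t, HasDerivAt cn (-(sn t * dn t)) t)
    (hdn : ∀ t, HasDerivAt dn (-(k ^ 2 * sn t * cn t)) t)
    (K : ℝ)
    (hK : K = ∫ t in (0:ℝ)..(Real.pi / 2), 1 / Real.sqrt (1 - k ^ 2 * Real.sin t ^ 2))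
    (E : ℝ → ℝ) (hE : ∀ p, E p = ∫ t in (0:ℝ)..p, dn t ^ 2)
    (α ae : ℝ) (hα : α ≠ 0) (hae : 0 < ae)
    (hrel : 16 * ae ^ 4 * k ^ 2 * (1 - k ^ 2) = α ^ 2) :
    ∀ p ∈ Set.Ioo 0 K,
      0 < -16 * ae ^ 4 * k ^ 4 * cn p ^ 3 * dn p * sn p
          + (16 * ae ^ 4 * k ^ 2 * E p - α ^ 2 * p)
            * (dn p ^ 2 - k ^ 2 * cn p ^ 2 * sn p ^ 2) := by
  obtain ⟨hk0, hk1⟩ := hk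
  have hk2 : (0:ℝ) < k ^ 2 := by positivity
  have hk2' : k ^ 2 < 1 := by nlinarith
  have h1k : (0:ℝ) < 1 - k ^ 2 := by linarith
  -- Pythagorean identities
  have hsc : ∀ t, sn t ^ 2 + cn t ^ 2 = 1 := by
    intro t
    have h : ∀ x, HasDerivAt (fun t => sn t ^ 2 + cn t ^ 2) 0 x := by
      intro x
      have h' := ((hsn x).fun_pow 2).fun_add ((hcn x).fun_pow 2)
      exact h'.congr_deriv (by ring)
    have := is_const_of_deriv_eq_zero (f := fun t => sn t ^ 2 + cn t ^ 2)
      (fun x => (h x).differentiableAt) (fun x => (h x).deriv) t 0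
    simpa [hsn0, hcn0] using this
  have hdn2 : ∀ t, dn t ^ 2 = 1 - k ^ 2 * sn t ^ 2 := by
    intro t
    have h : ∀ x, HasDerivAt (fun t => dn t ^ 2 + k ^ 2 * sn t ^ 2) 0 x := by
      intro x
      have h' := ((hdn x).fun_pow 2).fun_add (((hsn x).fun_pow 2).const_mul (k ^ 2))
      exact h'.congr_deriv (by ring)
    have := is_const_of_deriv_eq_zero (f := fun t => dn t ^ 2 + k ^ 2 * sn t ^ 2)
      (fun x => (h x).differentiableAt) (fun x => (h x).deriv) t 0
    simp only [hsn0, hdn0] at this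
    nlinarith [this]
  -- positivity of B
  have hBpos : ∀ t, 0 < dn t ^ 2 - k ^ 2 * cn t ^ 2 * sn t ^ 2 := by
    intro t
    nlinarith [hsc t, hdn2 t, mul_nonneg hk2.le (sq_nonneg (1 - sn t ^ 2))]
  have hdnpos : ∀ t, 0 < dn t ^ 2 := by
    intro t
    nlinarith [hdn2 t, hsc t, mul_nonneg hk2.le (sq_nonneg (cn t)), h1k]
  -- derivative of E
  have hdnd : Differentiable ℝ dn := fun x => (hdn x).differentiableAt
  have hdnc : Continuous dn := hdnd.continuous
  have hEd : ∀ p, HasDerivAt E (dn p ^ 2) p := by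
    intro p
    have hc : Continuous fun t => dn t ^ 2 := hdnc.pow 2
    have h0 : HasDerivAt (fun q => ∫ t in (0:ℝ)..q, dn t ^ 2) (dn p ^ 2) p :=
      intervalIntegral.integral_hasDerivAt_right (hc.intervalIntegrable 0 p)
        (hc.stronglyMeasurableAtFilter _ _) hc.continuousAt
    have hEF : E = fun q => ∫ t in (0:ℝ)..q, dn t ^ 2 := funext hE
    rw [hEF]
    exact h0
  -- The auxiliary function G and its derivative
  set G : ℝ → ℝ := fun t =>
    (E t - (1 - k ^ 2) * t) -
      k ^ 2 * (sn t * cn t ^ 3 * dn t) / (dn t ^ 2 - k ^ 2 * cn t ^ 2 * sn t ^ 2)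
    with hGdef
  have hGd : ∀ p, HasDerivAt G
      (4 * k ^ 2 * (1 - k ^ 2) * (sn p * cn p * dn p) ^ 2 /
        (dn p ^ 2 - k ^ 2 * cn p ^ 2 * sn p ^ 2) ^ 2) p := by
    intro p
    have hB : HasDerivAt (fun t => dn t ^ 2 - k ^ 2 * cn t ^ 2 * sn t ^ 2)
        (-(2 * k ^ 2 * sn p * cn p * dn p * (1 - sn p ^ 2 + cn p ^ 2))) p := by
      have h' := ((hdn p).fun_pow 2).fun_sub
        ((((hcn p).fun_pow 2).const_mul (k ^ 2)).fun_mul ((hsn p).fun_pow 2))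
      exact h'.congr_deriv (by ring)
    have hu : HasDerivAt (fun t => sn t * cn t ^ 3 * dn t)
        (cn p ^ 4 * dn p ^ 2 - 3 * sn p ^ 2 * cn p ^ 2 * dn p ^ 2
          - k ^ 2 * sn p ^ 2 * cn p ^ 4) p := by
      have h' := ((hsn p).fun_mul ((hcn p).fun_pow 3)).fun_mul (hdn p)
      exact h'.congr_deriv (by ring)
    have hF : HasDerivAt (fun t => E t - (1 - k ^ 2) * t) (dn p ^ 2 - (1 - k ^ 2)) p := by
      have h' := (hEd p).fun_sub ((hasDerivAt_id p).const_mul (1 - k ^ 2))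
      exact h'.congr_deriv (by ring)
    have hne : dn p ^ 2 - k ^ 2 * cn p ^ 2 * sn p ^ 2 ≠ 0 := (hBpos p).ne'
    have hQ := (hu.const_mul (k ^ 2)).fun_div hB hne
    have hG' := hF.fun_sub hQ
    refine hG'.congr_deriv ?_
    symm
    have hkey : 4 * k ^ 2 * (1 - k ^ 2) * (sn p * cn p * dn p) ^ 2 =
        (dn p ^ 2 - (1 - k ^ 2)) * (dn p ^ 2 - k ^ 2 * cn p ^ 2 * sn p ^ 2) ^ 2 -
          (k ^ 2 * (cn p ^ 4 * dn p ^ 2 - 3 * sn p ^ 2 * cn p ^ 2 * dn p ^ 2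
              - k ^ 2 * sn p ^ 2 * cn p ^ 4) * (dn p ^ 2 - k ^ 2 * cn p ^ 2 * sn p ^ 2) -
            k ^ 2 * (sn p * cn p ^ 3 * dn p) *
              (-(2 * k ^ 2 * sn p * cn p * dn p * (1 - sn p ^ 2 + cn p ^ 2)))) := by
      linear_combination (-(-(k ^ 2) - cn p ^ 2 * k ^ 2 + 2 * sn p ^ 2 * k ^ 4 - sn p ^ 2 * cn p ^ 4 * k ^ 4 - sn p ^ 4 * k ^ 6 + sn p ^ 4 * cn p ^ 2 * k ^ 6)) * hsc p + (-(k ^ 2 + dn p ^ 2 * k ^ 2 + dn p ^ 4 - cn p ^ 4 * k ^ 2 - cn p ^ 4 * dn p ^ 2 * k ^ 2 - sn p ^ 2 * k ^ 2 - sn p ^ 2 * k ^ 4 - sn p ^ 2 * dn p ^ 2 * k ^ 2 - sn p ^ 2 * cn p ^ 2 * k ^ 2 + 2 * sn p ^ 2 * cn p ^ 2 * k ^ 4 + sn p ^ 2 * cn p ^ 2 * dn p ^ 2 * k ^ 2 - sn p ^ 2 * cn p ^ 6 * k ^ 4 + sn p ^ 4 * k ^ 4 - sn p ^ 4 * cn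 p ^ 2 * k ^ 4)) * hdn2 p
    rw [eq_sub_iff_add_eq, ← add_div, div_eq_iff (pow_ne_zero 2 hne)]
    linear_combination hkey
  have hGdiff : Differentiable ℝ G := fun x => (hGd x).differentiableAt
  have hmono : Monotone G := by
    apply monotone_of_deriv_nonneg hGdiff
    intro x
    rw [(hGd x).deriv]
    apply div_nonneg _ (sq_nonneg _)
    nlinarith [mul_nonneg (mul_nonneg (mul_nonneg (by norm_num : (0:ℝ) ≤ 4) hk2.le) h1k.le)
      (sq_nonneg (sn x * cn x * dn x))]
  have hG0 : G 0 = 0 := by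
    have hE0 : E 0 = 0 := by rw [hE 0, intervalIntegral.integral_same]
    simp [hGdef, hE0, hsn0]
  have hsn1 : HasDerivAt sn 1 0 := by
    have h := hsn 0
    rwa [hcn0, hdn0, mul_one] at h
  have hslope : ∀ᶠ t in nhdsWithin 0 {(0:ℝ)}ᶜ, 1/2 < slope sn 0 t :=
    (hasDerivAt_iff_tendsto_slope.mp hsn1).eventually (eventually_gt_nhds (by norm_num))
  have hcnpos : ∀ᶠ t in nhds (0:ℝ), 0 < cn t := by
    have hc : Filter.Tendsto cn (nhds 0) (nhds 1) := by
      rw [← hcn0]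
      exact (hcn 0).differentiableAt.continuousAt
    exact hc.eventually (eventually_gt_nhds one_pos)
  have hcomb := hslope.and (hcnpos.filter_mono nhdsWithin_le_nhds)
  rw [eventually_nhdsWithin_iff] at hcomb
  obtain ⟨ε, hε, hball⟩ := Metric.eventually_nhds_iff.mp hcomb
  have hpos' : ∀ x ∈ Set.Ioo (0:ℝ) ε, 0 < deriv G x := by
    intro x hx
    obtain ⟨hx0, hxε⟩ := hx
    have hd : dist x (0:ℝ) < ε := by
      rw [Real.dist_eq, sub_zero, abs_of_pos hx0]
      exact hxε
    obtain ⟨hs, hcpos⟩ := hball hd (by simp [hx0.ne'] : x ∈ ({(0:ℝ)}ᶜ : Set ℝ))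
    rw [slope_def_field, hsn0] at hs
    have hsx : 0 < sn x := by
      have h' := (lt_div_iff₀ (by linarith : (0:ℝ) < x - 0)).mp hs
      nlinarith
    have hdx : dn x ≠ 0 := by
      intro h
      have h2 := hdnpos x
      rw [h] at h2
      simp at h2
    rw [(hGd x).deriv]
    apply div_pos _ (pow_pos (hBpos x) 2)
    have habc : sn x * cn x * dn x ≠ 0 := mul_ne_zero (mul_ne_zero hsx.ne' hcpos.ne') hdx
    have h2 : 0 < (sn x * cn x * dn x) ^ 2 :=
      lt_of_le_of_ne (sq_nonneg _) (Ne.symm (pow_ne_zero 2 habc))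
    nlinarith [mul_pos (mul_pos (mul_pos (by norm_num : (0:ℝ) < 4) hk2) h1k) h2]
  intro p hp
  obtain ⟨hp0, hpK⟩ := hp
  have hGp : 0 < G p := by
    set q := min p (ε/2) with hq
    have hq0 : 0 < q := lt_min hp0 (by linarith)
    have hqε : q < ε := lt_of_le_of_lt (min_le_right _ _) (by linarith)
    have hqp : q ≤ p := min_le_left _ _
    have hstrict : StrictMonoOn G (Set.Icc 0 q) := by
      apply strictMonoOn_of_deriv_pos (convex_Icc 0 q) hGdiff.continuous.continuousOn
      intro x hx
      rw [interior_Icc] at hx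
      exact hpos' x ⟨hx.1, lt_trans hx.2 hqε⟩
    have h1 : G 0 < G q :=
      hstrict (Set.left_mem_Icc.mpr hq0.le) (Set.right_mem_Icc.mpr hq0.le) hq0
    have h2 : G q ≤ G p := hmono hqp
    rw [hG0] at h1
    linarith
  have hne : dn p ^ 2 - k ^ 2 * cn p ^ 2 * sn p ^ 2 ≠ 0 := (hBpos p).ne'
  have hfinal : -16 * ae ^ 4 * k ^ 4 * cn p ^ 3 * dn p * sn p
      + (16 * ae ^ 4 * k ^ 2 * E p - α ^ 2 * p) * (dn p ^ 2 - k ^ 2 * cn p ^ 2 * sn p ^ 2)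
      = 16 * ae ^ 4 * k ^ 2 * ((dn p ^ 2 - k ^ 2 * cn p ^ 2 * sn p ^ 2) * G p) := by
    rw [hGdef]
    field_simp
    linear_combination (p * (dn p ^ 2 - k ^ 2 * cn p ^ 2 * sn p ^ 2)) * hrel
  rw [hfinal]
  have h16 : (0:ℝ) < 16 * ae ^ 4 * k ^ 2 := by positivity
  exact mul_pos h16 (mul_pos (hBpos p) hGp)
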